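/- In the setting of the boundary triple {N_i, Γ₀, Γ₁} constructed from a self-adjoint extension A of S via Γ₀f = f_i and Γ₁f = P_{N_i}(A+i)f_A + i f_i, the corresponding Weyl–Titchmarsh function equals the Donoghue-type M-function: M(z) = z I_{N_i} + (z² + 1) P_{N_i} (A - z)⁻¹ ι_{N_i} for all z ∈ ρ(A), where ι_{N_i} is the inclusion of N_i into 𝔥 and P_{N_i} the orthogonal projection onto N_i. -/

import Mathlib

open scoped ComplexInnerProductSpace ComplexConjugate

/-- The eigenspace `ker (T - z)` of a possibly unbounded operator `T`,
as a submodule of the ambient space. -/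
def pEigenspace {𝔥 : Type*} [NormedAddCommGroup 𝔥] [InnerProductSpace ℂ 𝔥]
    (T : 𝔥 →ₗ.[ℂ] 𝔥) (z : ℂ) : Submodule ℂ 𝔥 where
  carrier := {x | ∃ hx : x ∈ T.domain, T ⟨x, hx⟩ = z • x}
  add_mem' := by
    rintro x y ⟨hx, hfx⟩ ⟨hy, hfy⟩
    refine ⟨add_mem hx hy, ?_⟩
    have h : (⟨x + y, add_mem hx hy⟩ : T.domain) = ⟨x, hx⟩ + ⟨y, hy⟩ := rfl
    rw [h, T.map_add, hfx, hfy, smul_add]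
  zero_mem' := by
    refine ⟨zero_mem _, ?_⟩
    have h : (⟨(0 : 𝔥), zero_mem _⟩ : T.domain) = 0 := rfl
    rw [h, T.map_zero, smul_zero]
  smul_mem' := by
    rintro c x ⟨hx, hfx⟩
    refine ⟨Submodule.smul_mem _ c hx, ?_⟩
    have h : (⟨c • x, Submodule.smul_mem _ c hx⟩ : T.domain) = c • (⟨x, hx⟩ : T.domain) := rfl
    rw [h, T.map_smul, hfx, smul_comm]

/-- `R` is the (everywhere defined, bounded) resolvent of the possibly unbounded operator `T`
at the point `z`, i.e. `R = (T - z)⁻¹`. -/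
def IsResolventAt {H : Type*} [NormedAddCommGroup H] [InnerProductSpace ℂ H]
    (T : H →ₗ.[ℂ] H) (z : ℂ) (R : H →L[ℂ] H) : Prop :=
  (∀ y : H, ∃ hy : R y ∈ T.domain, T ⟨R y, hy⟩ - z • R y = y) ∧
  ∀ x : T.domain, R (T x - z • (x : H)) = (x : H)

/-!
STATEMENT 9: For the Donoghue boundary triple `{N_i, Γ₀, Γ₁}` constructed from a self-adjoint
extension `A` of `S` (`Γ₀ f = f_i`, `Γ₁ f = P_{N_i}(A + i) f_A + i f_i`), the corresponding
Weyl–Titchmarsh function is the Donoghue-type `M`-function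
`M(z) = z I_{N_i} + (z² + 1) P_{N_i} (A - z)⁻¹ ι_{N_i}` for all `z ∈ ρ(A)`.
-/


open LinearPMap in
lemma pEigenspace_adjoint_isClosed' {𝔥 : Type*} [NormedAddCommGroup 𝔥] [InnerProductSpace ℂ 𝔥]
    [CompleteSpace 𝔥] (S : 𝔥 →ₗ.[ℂ] 𝔥) (hSdense : Dense (S.domain : Set 𝔥)) (z : ℂ) :
    IsClosed ((pEigenspace S.adjoint z : Set 𝔥)) := by
  have hset : (pEigenspace S.adjoint z : Set 𝔥)
      = ⋂ f : S.domain, {x : 𝔥 | ⟪z • x, (f : 𝔥)⟫ = ⟪x, S f⟫} := by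
    ext x
    simp only [Set.mem_iInter, Set.mem_setOf_eq]
    constructor
    · rintro ⟨hx, hfx⟩ f
      have h := S.adjoint_isFormalAdjoint hSdense (⟨x, hx⟩ : S.adjoint.domain) f
      rw [hfx] at h
      exact h
    · intro h
      have hx : x ∈ S.adjoint.domain :=
        LinearPMap.mem_adjoint_domain_of_exists x ⟨z • x, fun f => h f⟩
      exact ⟨hx, LinearPMap.adjoint_apply_eq hSdense ⟨x, hx⟩ fun f => h f⟩
  rw [hset]
  exact isClosed_iInter fun f => isClosed_eq
    ((continuous_const_smul z).inner continuous_const) (continuous_id.inner continuous_const)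

theorem donoghue_weyl_function
    {𝔥 : Type*} [NormedAddCommGroup 𝔥] [InnerProductSpace ℂ 𝔥] [CompleteSpace 𝔥]
    (S : 𝔥 →ₗ.[ℂ] 𝔥) (hSdense : Dense (S.domain : Set 𝔥)) (hSclosed : S.IsClosed)
    (hSsymm : ∀ f g : S.domain, ⟪S f, (g : 𝔥)⟫ = ⟪(f : 𝔥), S g⟫)
    (A : 𝔥 →ₗ.[ℂ] 𝔥) (hAsa : IsSelfAdjoint A) (hSA : S ≤ A) (hASstar : A ≤ S.adjoint)
    -- the direct sum decomposition `dom S* = dom A ∔ N_i`, `f = f_A + f_i` :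
    (πA πi : S.adjoint.domain →ₗ[ℂ] 𝔥)
    (hπA : ∀ f : S.adjoint.domain, πA f ∈ A.domain)
    (hπi : ∀ f : S.adjoint.domain, πi f ∈ pEigenspace S.adjoint Complex.I)
    (hdec : ∀ f : S.adjoint.domain, (f : 𝔥) = πA f + πi f)
    -- the boundary maps of the Donoghue boundary triple :
    (Γ₀ Γ₁ : S.adjoint.domain →ₗ[ℂ] (pEigenspace S.adjoint Complex.I))
    (hΓ₀ : ∀ f : S.adjoint.domain, (Γ₀ f : 𝔥) = πi f)
    (hΓ₁ : ∀ f : S.adjoint.domain, ∀ u ∈ pEigenspace S.adjoint Complex.I,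
      ⟪A ⟨πA f, hπA f⟩ + Complex.I • πA f - ((Γ₁ f : 𝔥) - Complex.I • πi f), u⟫ = 0)
    -- the resolvent set `ρ(A)` with resolvents `RA z = (A - z)⁻¹` :
    (ρA : Set ℂ) (RA : ℂ → 𝔥 →L[ℂ] 𝔥) (hρA : ∀ z ∈ ρA, IsResolventAt A z (RA z))
    -- `M` is the Weyl–Titchmarsh function of this boundary triple :
    (M : ℂ → (pEigenspace S.adjoint Complex.I) →L[ℂ] (pEigenspace S.adjoint Complex.I))
    (hM : ∀ z ∈ ρA, ∀ φ : pEigenspace S.adjoint Complex.I,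
      ∃ f : S.adjoint.domain, S.adjoint f = z • (f : 𝔥) ∧ Γ₀ f = φ ∧ Γ₁ f = M z φ) :
    -- conclusion: `M(z) = z I + (z² + 1) P_{N_i} (A - z)⁻¹ ι_{N_i}` on `ρ(A)`,
    -- with `w` denoting the orthogonal projection `P_{N_i} ((A - z)⁻¹ φ)` :
    ∀ z ∈ ρA, ∀ φ : pEigenspace S.adjoint Complex.I,
      ∃ w : 𝔥, w ∈ pEigenspace S.adjoint Complex.I ∧
        (∀ u ∈ pEigenspace S.adjoint Complex.I, ⟪RA z (φ : 𝔥) - w, u⟫ = 0) ∧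
        (M z φ : 𝔥) = z • (φ : 𝔥) + (z ^ 2 + 1) • w := by
  intro z hz φ
  haveI : CompleteSpace (pEigenspace S.adjoint Complex.I) :=
    (pEigenspace_adjoint_isClosed' S hSdense Complex.I).completeSpace_coe
  obtain ⟨w, hwmem, hproj⟩ :
      ∃ w : 𝔥, w ∈ pEigenspace S.adjoint Complex.I ∧
        ∀ u ∈ pEigenspace S.adjoint Complex.I, ⟪RA z (φ : 𝔥) - w, u⟫ = 0 :=
    ⟨(Submodule.orthogonalProjectionOnto (pEigenspace S.adjoint Complex.I) (RA z (φ : 𝔥)) : 𝔥),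
      (Submodule.orthogonalProjectionOnto (pEigenspace S.adjoint Complex.I) (RA z (φ : 𝔥))).2,
      fun u hu => Submodule.starProjection_inner_eq_zero _ u hu⟩
  obtain ⟨f, hSf, hΓ0f, hΓ1f⟩ := hM z hz φ
  have hπif : πi f = (φ : 𝔥) := by rw [← hΓ₀ f, hΓ0f]
  have hfAdom : πA f ∈ S.adjoint.domain := hASstar.1 (hπA f)
  obtain ⟨hφdom, hφeq⟩ := φ.2
  have hfdec : f = (⟨πA f, hfAdom⟩ : S.adjoint.domain) + ⟨(φ : 𝔥), hφdom⟩ := by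
    apply Subtype.ext
    rw [Submodule.coe_add]
    exact (hπif ▸ hdec f : (f : 𝔥) = πA f + (φ : 𝔥))
  have hSfA : S.adjoint ⟨πA f, hfAdom⟩ = A ⟨πA f, hπA f⟩ := (hASstar.2 rfl).symm
  have hSφ : S.adjoint ⟨(φ : 𝔥), hφdom⟩ = Complex.I • (φ : 𝔥) := hφeq
  have hfull : A ⟨πA f, hπA f⟩ + Complex.I • (φ : 𝔥) = z • πA f + z • (φ : 𝔥) := by
    have h := hSf
    rw [hfdec] at h
    rw [S.adjoint.map_add, hSfA, hSφ] at h
    rw [h, Submodule.coe_add, smul_add]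
  have hAfA' : A ⟨πA f, hπA f⟩ = z • πA f + (z - Complex.I) • (φ : 𝔥) := by
    have h : A ⟨πA f, hπA f⟩ = z • πA f + z • (φ : 𝔥) - Complex.I • (φ : 𝔥) := by
      rw [← hfull]; abel
    rw [h, sub_smul]; abel
  have hAfA : A ⟨πA f, hπA f⟩ - z • πA f = (z - Complex.I) • (φ : 𝔥) := by
    rw [hAfA']; abel
  have hres := (hρA z hz).2 ⟨πA f, hπA f⟩
  have hfAeq : πA f = (z - Complex.I) • RA z (φ : 𝔥) := by
    calc πA f = RA z ((z - Complex.I) • (φ : 𝔥)) := by rw [← hAfA]; exact hres.symm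
    _ = (z - Complex.I) • RA z (φ : 𝔥) := by rw [map_smul]
  have hc : (z + Complex.I) * (z - Complex.I) = z ^ 2 + 1 := by
    have h2 : Complex.I ^ 2 = -1 := Complex.I_sq
    linear_combination -h2
  have key : ∀ u ∈ pEigenspace S.adjoint Complex.I,
      ⟪z • (φ : 𝔥) + (z ^ 2 + 1) • w - (M z φ : 𝔥), u⟫ = 0 := by
    intro u hu
    have h1 := hΓ₁ f u hu
    rw [hΓ1f, hπif] at h1
    have hvec : A ⟨πA f, hπA f⟩ + Complex.I • πA f - ((M z φ : 𝔥) - Complex.I • (φ : 𝔥))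
        = (z ^ 2 + 1) • (RA z (φ : 𝔥) - w)
          + (z • (φ : 𝔥) + (z ^ 2 + 1) • w - (M z φ : 𝔥)) := by
      rw [hAfA', hfAeq, ← hc]
      module
    rw [hvec, inner_add_left, inner_smul_left, hproj u hu, mul_zero, zero_add] at h1
    exact h1
  have hvK : z • (φ : 𝔥) + (z ^ 2 + 1) • w - (M z φ : 𝔥) ∈ pEigenspace S.adjoint Complex.I := by
    refine Submodule.sub_mem _ (Submodule.add_mem _ ?_ ?_) (M z φ).2
    · exact Submodule.smul_mem _ _ φ.2
    · exact Submodule.smul_mem _ _ hwmem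
  have hv0 : z • (φ : 𝔥) + (z ^ 2 + 1) • w - (M z φ : 𝔥) = 0 :=
    inner_self_eq_zero.mp (key _ hvK)
  exact ⟨w, hwmem, hproj, (sub_eq_zero.mp hv0).symm⟩
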